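/- Let A = {x ∈ E : f_i(x) ≤ 0, i = 1,…,m} and B = {x ∈ E : g_j(x) ≤ 0, j = 1,…,n} be convex bodies in a real inner product space E, with each f_i, g_j convex and differentiable. Suppose a1 ∈ A, a2 ∈ B and there are multipliers l_1,…,l_m satisfying complementarity at a1 for the f_i and multipliers m_1,…,m_n satisfying complementarity at a2 for the g_j such that a2 − a1 = Σ_i l_i ∇f_i(a1) and a1 − a2 = Σ_j m_j ∇g_j(a2). Then (a1, a2) is a pair of closest points of A and B: for every x ∈ A and every y ∈ B, ‖a1 − a2‖ ≤ ‖x − y‖. -/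

import Mathlib

open RealInnerProductSpace

lemma grad_subgradient_ineq {E : Type*} [NormedAddCommGroup E] [InnerProductSpace ℝ E] [CompleteSpace E]
    {f : E → ℝ} {G a : E} (hconv : ConvexOn ℝ Set.univ f)
    (hgrad : HasGradientAt f G a) (x : E) :
    ⟪G, x - a⟫ ≤ f x - f a := by
  set v := x - a with hv
  have hline : HasDerivAt (fun t : ℝ => a + t • v) v 0 := by
    simpa using (hasDerivAt_id (0:ℝ)).smul_const v |>.const_add a
  have hcomp : HasDerivAt (fun t : ℝ => f (a + t • v)) ⟪G, v⟫ 0 := by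
    have := (show HasFDerivAt f ((InnerProductSpace.toDual ℝ E) G) ((fun t : ℝ => a + t • v) 0) by simpa using hgrad.hasFDerivAt).comp_hasDerivAt 0 hline
    simpa [InnerProductSpace.toDual_apply_apply, Function.comp_def] using this
  have htend := hasDerivAt_iff_tendsto_slope.mp hcomp
  have htend' : Filter.Tendsto (slope (fun t : ℝ => f (a + t • v)) 0) (nhdsWithin 0 (Set.Ioi 0)) (nhds ⟪G, v⟫) :=
    htend.mono_left (nhdsWithin_mono _ (fun t ht => ne_of_gt ht))
  refine le_of_tendsto htend' ?_
  filter_upwards [Ioo_mem_nhdsGT (show (0:ℝ) < 1 from one_pos)] with t ht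
  have ht0 : 0 < t := ht.1
  have ht1 : t < 1 := ht.2
  have hcv := hconv.2 (Set.mem_univ a) (Set.mem_univ x) (by linarith : (0:ℝ) ≤ 1 - t) ht0.le (by ring)
  have hpt : (1 - t) • a + t • x = a + t • v := by
    rw [hv]; module
  rw [hpt] at hcv
  have hs : slope (fun t : ℝ => f (a + t • v)) 0 t = t⁻¹ * (f (a + t • v) - f a) := by
    simp [slope]
  rw [hs, inv_mul_le_iff₀ ht0]
  simp only [smul_eq_mul] at hcv
  nlinarith

/-- Separation case of Proposition 1: the KKT-derived contact equations force the
equivalent contact points to be the closest points of the two convex bodies. -/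
theorem closest_points_of_kkt
    {E : Type*} [NormedAddCommGroup E] [InnerProductSpace ℝ E] [CompleteSpace E]
    {m n : ℕ} (f : Fin m → E → ℝ) (g : Fin n → E → ℝ)
    (f' : Fin m → E → E) (g' : Fin n → E → E)
    (hfconv : ∀ i, ConvexOn ℝ Set.univ (f i))
    (hgconv : ∀ j, ConvexOn ℝ Set.univ (g j))
    (hfgrad : ∀ i x, HasGradientAt (f i) (f' i x) x)
    (hggrad : ∀ j x, HasGradientAt (g j) (g' j x) x)
    (A B : Set E)
    (hA : A = {x : E | ∀ i, f i x ≤ 0})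
    (hB : B = {x : E | ∀ j, g j x ≤ 0})
    (a1 a2 : E) (ha1 : a1 ∈ A) (ha2 : a2 ∈ B)
    (l : Fin m → ℝ) (μ : Fin n → ℝ)
    -- complementarity of the multipliers l at a1 for the f i
    (hl_nonneg : ∀ i, 0 ≤ l i) (hl_feas : ∀ i, f i a1 ≤ 0)
    (hl_comp : ∀ i, l i * f i a1 = 0)
    -- complementarity of the multipliers μ at a2 for the g j
    (hμ_nonneg : ∀ j, 0 ≤ μ j) (hμ_feas : ∀ j, g j a2 ≤ 0)
    (hμ_comp : ∀ j, μ j * g j a2 = 0)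
    -- the KKT-derived contact equations
    (heq1 : a2 - a1 = ∑ i, l i • f' i a1)
    (heq2 : a1 - a2 = ∑ j, μ j • g' j a2) :
    ∀ x ∈ A, ∀ y ∈ B, ‖a1 - a2‖ ≤ ‖x - y‖ := by
  intro x hx y hy
  rw [hA] at hx; rw [hB] at hy
  have hx1 : ⟪a2 - a1, x - a1⟫ ≤ 0 := by
    rw [heq1, sum_inner]
    apply Finset.sum_nonpos
    intro i _
    rw [real_inner_smul_left]
    have h1 := grad_subgradient_ineq (hfconv i) (hfgrad i a1) x
    have h2 : f i x ≤ 0 := hx i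
    nlinarith [hl_nonneg i, hl_comp i, mul_le_mul_of_nonneg_left h1 (hl_nonneg i)]
  have hy1 : ⟪a1 - a2, y - a2⟫ ≤ 0 := by
    rw [heq2, sum_inner]
    apply Finset.sum_nonpos
    intro j _
    rw [real_inner_smul_left]
    have h1 := grad_subgradient_ineq (hgconv j) (hggrad j a2) y
    have h2 : g j y ≤ 0 := hy j
    nlinarith [hμ_nonneg j, hμ_comp j, mul_le_mul_of_nonneg_left h1 (hμ_nonneg j)]
  set d := a1 - a2 with hd
  have hkey : ‖d‖ ^ 2 ≤ ⟪x - y, d⟫ := by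
    have hdecomp : x - y = (x - a1) + d + (a2 - y) := by rw [hd]; abel
    rw [hdecomp, inner_add_left, inner_add_left, real_inner_self_eq_norm_sq]
    have h1 : (0:ℝ) ≤ ⟪x - a1, d⟫ := by
      have : ⟪x - a1, d⟫ = -⟪a2 - a1, x - a1⟫ := by
        rw [real_inner_comm, hd, show a1 - a2 = -(a2 - a1) by abel, inner_neg_left]
      linarith [hx1, this.ge, this.le]
    have h2 : (0:ℝ) ≤ ⟪a2 - y, d⟫ := by
      have : ⟪a2 - y, d⟫ = -⟪d, y - a2⟫ := by
        rw [real_inner_comm, show a2 - y = -(y - a2) by abel, inner_neg_right]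
      linarith [hy1, this.ge]
    linarith
  have hcs : ⟪x - y, d⟫ ≤ ‖x - y‖ * ‖d‖ := real_inner_le_norm _ _
  rcases eq_or_lt_of_le (norm_nonneg d) with h0 | h0
  · rw [← h0]; exact norm_nonneg _
  · have : ‖d‖ * ‖d‖ ≤ ‖x - y‖ * ‖d‖ := by nlinarith
    exact le_of_mul_le_mul_right this h0
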